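/- A presheaf of sets F on the category Stonean of extremally disconnected compact Hausdorff spaces is a sheaf for the coherent topology if and only if F preserves finite products, i.e. F(∅) is a singleton and for all Stonean spaces S₁, S₂ the canonical map F(S₁ ⊔ S₂) → F(S₁) × F(S₂) is a bijection. -/

import Mathlib

/-!
STATEMENT 5: A presheaf of sets on `Stonean` is a sheaf for the coherent topology if and only if
it preserves finite products, i.e. `F(∅)` is a singleton and for all Stonean spaces `S₁, S₂` the
canonical map `F(S₁ ⊔ S₂) → F(S₁) × F(S₂)` is a bijection.
-/

universe u

open CategoryTheory Limits Opposite

/-- The binary fan in `Stoneanᵒᵖ` coming from a binary coproduct in `Stonean` is a limit fan. -/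
noncomputable def stoneanOpCoprodIsLimit (S₁ S₂ : Stonean.{u}) :
    IsLimit (BinaryFan.mk ((coprod.inl : S₁ ⟶ S₁ ⨿ S₂).op)
      ((coprod.inr : S₂ ⟶ S₁ ⨿ S₂).op)) := by
  apply BinaryFan.isLimitMk (fun s => (coprod.desc s.fst.unop s.snd.unop).op)
  · intro s
    apply Quiver.Hom.unop_inj
    exact coprod.inl_desc _ _
  · intro s
    apply Quiver.Hom.unop_inj
    exact coprod.inr_desc _ _
  · intro s m h₁ h₂
    apply Quiver.Hom.unop_inj
    apply coprod.hom_ext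
    · refine Eq.trans ?_ (coprod.inl_desc _ _).symm
      exact congrArg Quiver.Hom.unop h₁
    · refine Eq.trans ?_ (coprod.inr_desc _ _).symm
      exact congrArg Quiver.Hom.unop h₂

instance stoneanHasFiniteCoproducts : HasFiniteCoproducts (Stonean.{u}) := by
  have : CompHausLike.HasExplicitFiniteCoproducts.{0, u}
      (fun (Y : TopCat.{u}) ↦ ExtremallyDisconnected Y) := inferInstance
  exact inferInstanceAs
    (HasFiniteCoproducts (CompHausLike.{max u 0} (fun Y ↦ ExtremallyDisconnected Y)))

theorem isSheaf_coherent_stonean_iff_preservesFiniteProducts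
    (F : Stonean.{u}ᵒᵖ ⥤ Type (u+1)) :
    Presheaf.IsSheaf (coherentTopology Stonean.{u}) F ↔
      ((Nonempty (F.obj (op (⊥_ Stonean.{u}))) ∧ Subsingleton (F.obj (op (⊥_ Stonean.{u})))) ∧
        ∀ S₁ S₂ : Stonean.{u},
          Function.Bijective (fun x : F.obj (op (S₁ ⨿ S₂)) =>
            (F.map (coprod.inl : S₁ ⟶ S₁ ⨿ S₂).op x,
             F.map (coprod.inr : S₂ ⟶ S₁ ⨿ S₂).op x))) := by
  rw [Presheaf.isSheaf_iff_preservesFiniteProducts_of_projective F]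
  constructor
  · intro hF
    constructor
    · -- terminal object
      haveI : PreservesLimitsOfShape (Discrete PEmpty.{1}) F := inferInstance
      have ht : IsTerminal (op (⊥_ Stonean.{u})) := terminalOpOfInitial initialIsInitial
      have h2 : IsTerminal (F.obj (op (⊥_ Stonean.{u}))) := ht.isTerminalObj F _
      have e : F.obj (op (⊥_ Stonean.{u})) ≅ PUnit.{u+2} :=
        h2.uniqueUpToIso Types.isTerminalPunit
      exact ⟨⟨e.toEquiv.symm PUnit.unit⟩,
        ⟨fun a b => e.toEquiv.injective (Subsingleton.elim _ _)⟩⟩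
    · intro S₁ S₂
      haveI : PreservesLimitsOfShape (Discrete WalkingPair) F := inferInstance
      have hm := isLimitOfPreserves F (stoneanOpCoprodIsLimit S₁ S₂)
      have hbf : IsLimit (BinaryFan.mk (F.map (coprod.inl : S₁ ⟶ S₁ ⨿ S₂).op)
          (F.map (coprod.inr : S₂ ⟶ S₁ ⨿ S₂).op)) :=
        (isLimitMapConeBinaryFanEquiv F _ _) hm
      let e := hbf.conePointUniqueUpToIso
        (Types.binaryProductLimit (F.obj (op S₁)) (F.obj (op S₂)))
      have h1 : ∀ x, (e.hom x).1 = F.map (coprod.inl : S₁ ⟶ S₁ ⨿ S₂).op x := fun x => by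
        have h := ConcreteCategory.congr_hom (hbf.conePointUniqueUpToIso_hom_comp
          (Types.binaryProductLimit (F.obj (op S₁)) (F.obj (op S₂))) ⟨WalkingPair.left⟩) x
        exact h
      have h2 : ∀ x, (e.hom x).2 = F.map (coprod.inr : S₂ ⟶ S₁ ⨿ S₂).op x := fun x => by
        have h := ConcreteCategory.congr_hom (hbf.conePointUniqueUpToIso_hom_comp
          (Types.binaryProductLimit (F.obj (op S₁)) (F.obj (op S₂))) ⟨WalkingPair.right⟩) x
        exact h
      have : (fun x : F.obj (op (S₁ ⨿ S₂)) =>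
          (F.map (coprod.inl : S₁ ⟶ S₁ ⨿ S₂).op x,
           F.map (coprod.inr : S₂ ⟶ S₁ ⨿ S₂).op x)) = e.hom := by
        funext x
        exact Prod.ext (h1 x).symm (h2 x).symm
      rw [this]
      exact e.toEquiv.bijective
  · rintro ⟨⟨hne, hsub⟩, hbij⟩
    -- preservation of the terminal object
    haveI : Unique (F.obj (op (⊥_ Stonean.{u}))) :=
      { default := hne.some, uniq := fun a => hsub.elim a hne.some }
    have ht : IsTerminal (op (⊥_ Stonean.{u})) := terminalOpOfInitial initialIsInitial
    have hiso : F.obj (⊤_ Stonean.{u}ᵒᵖ) ≅ ⊤_ Type (u+1) :=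
      F.mapIso (terminalIsTerminal.uniqueUpToIso ht) ≪≫
        (Equiv.equivPUnit.{u+2, u+2} _).toIso ≪≫ Types.terminalIso.symm
    haveI : PreservesLimit (Functor.empty.{0} Stonean.{u}ᵒᵖ) F :=
      preservesTerminal_of_iso F hiso
    haveI := preservesLimitsOfShape_pempty_of_preservesTerminal F
    -- preservation of binary products
    haveI : ∀ (X Y : Stonean.{u}ᵒᵖ), PreservesLimit (pair X Y) F := by
      intro X Y
      let e := Equiv.ofBijective _ (hbij X.unop Y.unop)
      let lft : ∀ s : BinaryFan (F.obj (op X.unop)) (F.obj (op Y.unop)),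
          s.pt ⟶ F.obj (op (X.unop ⨿ Y.unop)) := fun s => TypeCat.ofHom fun x => e.symm (s.fst x, s.snd x)
      have hbf : IsLimit (BinaryFan.mk
          (F.map (coprod.inl : X.unop ⟶ X.unop ⨿ Y.unop).op)
          (F.map (coprod.inr : Y.unop ⟶ X.unop ⨿ Y.unop).op)) := by
        apply BinaryFan.isLimitMk lft
        · intro s
          ext x
          exact congrArg Prod.fst (e.apply_symm_apply (s.fst x, s.snd x))
        · intro s
          ext x
          exact congrArg Prod.snd (e.apply_symm_apply (s.fst x, s.snd x))
        · intro s m h₁ h₂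
          ext x
          apply e.injective
          change e (m x) = e (e.symm (s.fst x, s.snd x))
          rw [e.apply_symm_apply]
          have k₁ := ConcreteCategory.congr_hom h₁ x
          have k₂ := ConcreteCategory.congr_hom h₂ x
          exact Prod.ext k₁ k₂
      exact preservesLimit_of_preserves_limit_cone
        (stoneanOpCoprodIsLimit X.unop Y.unop)
        ((isLimitMapConeBinaryFanEquiv F _ _).symm hbf)
    haveI : PreservesLimitsOfShape (Discrete WalkingPair) F :=
      ⟨fun {K} => preservesLimit_of_iso_diagram F (diagramIsoPair K).symm⟩
    exact PreservesFiniteProducts.of_preserves_binary_and_terminal F
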